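/- Among all C² functions w : [a,b] → ℝ satisfying the boundary conditions w(a) = α₀, w'(a) = α₁, w(b) = β₀, w'(b) = β₁, the unique minimizer of J(w) = ∫ₐᵇ (w''(t))² dt is the cubic Hermite interpolant, i.e. the unique polynomial of degree at most 3 matching these four boundary conditions; equivalently, the minimizer satisfies w⁽⁴⁾ = 0 on [a,b]. -/

import Mathlib

open Polynomial intervalIntegral Set

private lemma sq_dvd_of_double_root {r : Polynomial ℝ} {c : ℝ} (h0 : r.eval c = 0)
    (h1 : r.derivative.eval c = 0) : (X - C c)^2 ∣ r := by
  obtain ⟨s, rfl⟩ := (dvd_iff_isRoot.2 h0)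
  have hs : s.eval c = 0 := by
    simpa [derivative_mul] using h1
  obtain ⟨u, rfl⟩ := (dvd_iff_isRoot.2 hs)
  exact ⟨u, by ring⟩

private lemma herm_unique {a b : ℝ} (hab : a ≠ b) {r : Polynomial ℝ} (hd : r.degree ≤ 3)
    (h1 : r.eval a = 0) (h2 : r.derivative.eval a = 0) (h3 : r.eval b = 0)
    (h4 : r.derivative.eval b = 0) : r = 0 := by
  have da := sq_dvd_of_double_root h1 h2
  have db := sq_dvd_of_double_root h3 h4
  have hcop : IsCoprime ((X - C a : Polynomial ℝ)^2) ((X - C b : Polynomial ℝ)^2) :=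
    (Polynomial.isCoprime_X_sub_C_of_isUnit_sub (isUnit_iff_ne_zero.2 (sub_ne_zero.2 hab))).pow
  have hdvd : (X - C a)^2 * (X - C b)^2 ∣ r := hcop.mul_dvd da db
  refine Polynomial.eq_zero_of_dvd_of_degree_lt hdvd ?_
  have : ((X - C a : Polynomial ℝ)^2 * (X - C b)^2).degree = 4 := by
    rw [degree_mul, degree_pow, degree_pow, degree_X_sub_C, degree_X_sub_C]
    rfl
  rw [this]
  exact lt_of_le_of_lt hd (by decide)

noncomputable def hermA (a b α₀ α₁ β₀ β₁ : ℝ) : ℝ :=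
  (3*(β₀ - α₀ - α₁*(b-a)) - (β₁ - α₁)*(b-a)) / (b-a)^2
noncomputable def hermB (a b α₀ α₁ β₀ β₁ : ℝ) : ℝ :=
  ((β₁ - α₁)*(b-a) - 2*(β₀ - α₀ - α₁*(b-a))) / (b-a)^3
noncomputable def hermP (a b α₀ α₁ β₀ β₁ : ℝ) : Polynomial ℝ :=
  C α₀ + C α₁ * (X - C a) + C (hermA a b α₀ α₁ β₀ β₁) * (X - C a)^2
    + C (hermB a b α₀ α₁ β₀ β₁) * (X - C a)^3

section
variable (a b α₀ α₁ β₀ β₁ : ℝ)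

lemma hermP_deg : (hermP a b α₀ α₁ β₀ β₁).degree ≤ 3 := by
  unfold hermP
  compute_degree

lemma hermP_d1 : (hermP a b α₀ α₁ β₀ β₁).derivative
    = C α₁ + C (2 * hermA a b α₀ α₁ β₀ β₁) * (X - C a)
      + C (3 * hermB a b α₀ α₁ β₀ β₁) * (X - C a)^2 := by
  unfold hermP
  simp [derivative_pow, C_mul, map_ofNat]
  ring

lemma hermP_d2 : (hermP a b α₀ α₁ β₀ β₁).derivative.derivative
    = C (2 * hermA a b α₀ α₁ β₀ β₁) + C (6 * hermB a b α₀ α₁ β₀ β₁) * (X - C a) := by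
  rw [hermP_d1]
  simp [derivative_pow, C_mul, map_ofNat]
  ring

lemma hermP_d3 : (hermP a b α₀ α₁ β₀ β₁).derivative.derivative.derivative
    = C (6 * hermB a b α₀ α₁ β₀ β₁) := by
  rw [hermP_d2]
  simp

lemma hermP_a : (hermP a b α₀ α₁ β₀ β₁).eval a = α₀ := by simp [hermP]
lemma hermP_b (hab : a ≠ b) : (hermP a b α₀ α₁ β₀ β₁).eval b = β₀ := by
  have h : b - a ≠ 0 := sub_ne_zero.2 (Ne.symm hab)
  simp only [hermP, hermA, hermB, eval_add, eval_mul, eval_pow, eval_sub, eval_C, eval_X]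
  field_simp
  ring
lemma hermP_d1_a : (hermP a b α₀ α₁ β₀ β₁).derivative.eval a = α₁ := by simp [hermP_d1]
lemma hermP_d1_b (hab : a ≠ b) : (hermP a b α₀ α₁ β₀ β₁).derivative.eval b = β₁ := by
  have h : b - a ≠ 0 := sub_ne_zero.2 (Ne.symm hab)
  simp only [hermP_d1, hermA, hermB, eval_add, eval_mul, eval_pow, eval_sub, eval_C, eval_X]
  field_simp
  ring
end

theorem stmt_19 (a b α₀ α₁ β₀ β₁ : ℝ) (hab : a < b) :
    ∃ p : Polynomial ℝ,
      (p.degree ≤ 3 ∧ p.eval a = α₀ ∧ p.derivative.eval a = α₁ ∧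
        p.eval b = β₀ ∧ p.derivative.eval b = β₁) ∧
      (∀ q : Polynomial ℝ,
        (q.degree ≤ 3 ∧ q.eval a = α₀ ∧ q.derivative.eval a = α₁ ∧
          q.eval b = β₀ ∧ q.derivative.eval b = β₁) → q = p) ∧
      (∀ w : ℝ → ℝ, ContDiff ℝ 2 w →
        w a = α₀ → deriv w a = α₁ → w b = β₀ → deriv w b = β₁ →
        (∫ t in a..b, (deriv (deriv (fun s => p.eval s)) t) ^ 2) ≤
          (∫ t in a..b, (deriv (deriv w) t) ^ 2) ∧
        ((∫ t in a..b, (deriv (deriv w) t) ^ 2) =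
            (∫ t in a..b, (deriv (deriv (fun s => p.eval s)) t) ^ 2) →
          ∀ t ∈ Set.Icc a b, w t = p.eval t)) := by
  have hne : a ≠ b := hab.ne
  set p : Polynomial ℝ := hermP a b α₀ α₁ β₀ β₁ with hpdef
  have hpa : p.eval a = α₀ := hermP_a a b α₀ α₁ β₀ β₁
  have hpb : p.eval b = β₀ := hermP_b a b α₀ α₁ β₀ β₁ hne
  have hp'a : p.derivative.eval a = α₁ := hermP_d1_a a b α₀ α₁ β₀ β₁
  have hp'b : p.derivative.eval b = β₁ := hermP_d1_b a b α₀ α₁ β₀ β₁ hne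
  have hpdeg : p.degree ≤ 3 := hermP_deg a b α₀ α₁ β₀ β₁
  refine ⟨p, ⟨hpdeg, hpa, hp'a, hpb, hp'b⟩, ?_, ?_⟩
  · rintro q ⟨hqd, hq1, hq2, hq3, hq4⟩
    have hr : q - p = 0 := by
      refine herm_unique hne (le_trans (degree_sub_le _ _) (max_le hqd hpdeg)) ?_ ?_ ?_ ?_
      · simp [hq1, hpa]
      · simp [derivative_sub, hq2, hp'a]
      · simp [hq3, hpb]
      · simp [derivative_sub, hq4, hp'b]
    exact sub_eq_zero.mp hr
  · intro w hw hw0 hw1 hw2 hw3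
    set p1 := p.derivative with hp1
    set p2 := p1.derivative with hp2
    have hp3 : derivative p2 = C (6 * hermB a b α₀ α₁ β₀ β₁) :=
      hermP_d3 a b α₀ α₁ β₀ β₁
    set K : ℝ := 6 * hermB a b α₀ α₁ β₀ β₁ with hK
    -- boundary conditions for the difference
    have ha0 : w a - p.eval a = 0 := by rw [hw0, hpa, sub_self]
    have hb0 : w b - p.eval b = 0 := by rw [hw2, hpb, sub_self]
    have ha1 : deriv w a - p1.eval a = 0 := by rw [hw1, hp'a, sub_self]
    have hb1 : deriv w b - p1.eval b = 0 := by rw [hw3, hp'b, sub_self]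
    -- regularity of w
    have hwd : Differentiable ℝ w := hw.differentiable (by norm_num)
    have hw' : ContDiff ℝ 1 (deriv w) := by
      have := hw.iterate_deriv' 1 1
      simpa using this
    have hwd' : Differentiable ℝ (deriv w) := hw'.differentiable (by norm_num)
    have hw''c : Continuous (deriv (deriv w)) := hw'.continuous_deriv le_rfl
    -- second derivative of the polynomial function
    have e1 : deriv (fun s : ℝ => p.eval s) = fun s => p1.eval s :=
      funext fun s => p.deriv
    have e2 : deriv (deriv (fun s : ℝ => p.eval s)) = fun t => p2.eval t := by
      rw [e1]; exact funext fun s => p1.deriv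
    set g : ℝ → ℝ := fun t => deriv (deriv w) t - p2.eval t with hg
    have hgc : Continuous g := hw''c.sub p2.continuous_aeval
    -- cross term vanishes
    set G : ℝ → ℝ := fun t => p2.eval t * (deriv w t - p1.eval t) - K * (w t - p.eval t)
      with hGdef
    have hGd : ∀ t, HasDerivAt G (p2.eval t * g t) t := by
      intro t
      have h1 : HasDerivAt (fun t => p2.eval t) K t := by
        have := p2.hasDerivAt t
        rwa [hp3, eval_C] at this
      have h2 : HasDerivAt (fun t => deriv w t - p1.eval t)
          (deriv (deriv w) t - p2.eval t) t :=
        ((hwd' t).hasDerivAt).sub (p1.hasDerivAt t)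
      have h3 : HasDerivAt (fun t => w t - p.eval t) (deriv w t - p1.eval t) t :=
        ((hwd t).hasDerivAt).sub (p.hasDerivAt t)
      have := (h1.mul h2).sub (h3.const_mul K)
      refine this.congr_deriv ?_
      simp only [hg]
      ring
    have hcross : (∫ t in a..b, p2.eval t * g t) = 0 := by
      have hint : IntervalIntegrable (fun t => p2.eval t * g t) MeasureTheory.volume a b :=
        (p2.continuous_aeval.mul hgc).intervalIntegrable a b
      rw [integral_eq_sub_of_hasDerivAt (fun t _ => hGd t) hint]
      simp [hGdef, ha0, ha1, hb0, hb1]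
    -- integrability
    have hint2 : IntervalIntegrable (fun t => (p2.eval t)^2) MeasureTheory.volume a b :=
      (p2.continuous_aeval.pow 2).intervalIntegrable a b
    have hintx : IntervalIntegrable (fun t => 2 * (p2.eval t * g t)) MeasureTheory.volume a b :=
      (continuous_const.mul (p2.continuous_aeval.mul hgc)).intervalIntegrable a b
    have hintg2 : IntervalIntegrable (fun t => (g t)^2) MeasureTheory.volume a b :=
      (hgc.pow 2).intervalIntegrable a b
    -- decomposition
    have key : (∫ t in a..b, (deriv (deriv w) t)^2)
        = (∫ t in a..b, (p2.eval t)^2) + ∫ t in a..b, (g t)^2 := by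
      have hpt : ∀ t, (deriv (deriv w) t)^2
          = (p2.eval t)^2 + (2 * (p2.eval t * g t) + (g t)^2) := by
        intro t; simp only [hg]; ring
      calc (∫ t in a..b, (deriv (deriv w) t)^2)
          = ∫ t in a..b, ((p2.eval t)^2 + (2 * (p2.eval t * g t) + (g t)^2)) := by
            simp only [hpt]
        _ = (∫ t in a..b, (p2.eval t)^2)
            + ∫ t in a..b, (2 * (p2.eval t * g t) + (g t)^2) :=
            integral_add hint2 (hintx.add hintg2)
        _ = (∫ t in a..b, (p2.eval t)^2)
            + ((∫ t in a..b, 2 * (p2.eval t * g t)) + ∫ t in a..b, (g t)^2) := by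
            rw [integral_add hintx hintg2]
        _ = (∫ t in a..b, (p2.eval t)^2) + ∫ t in a..b, (g t)^2 := by
            rw [integral_const_mul, hcross]; ring
    have hIg : 0 ≤ ∫ t in a..b, (g t)^2 :=
      integral_nonneg hab.le (fun u _ => sq_nonneg _)
    have e2' : (∫ t in a..b, (deriv (deriv (fun s => p.eval s)) t)^2)
        = ∫ t in a..b, (p2.eval t)^2 := by rw [e2]
    constructor
    · rw [e2']; linarith
    · intro heq t ht
      rw [e2'] at heq
      have hIg0 : (∫ t in a..b, (g t)^2) = 0 := by linarith
      -- g vanishes on [a,b]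
      have hg0 : ∀ s ∈ Icc a b, g s = 0 := by
        by_contra hcon
        push_neg at hcon
        obtain ⟨c, hc, hgc0⟩ := hcon
        have hpos : (0:ℝ) < ∫ t in a..b, (g t)^2 := by
          have h0 : (∫ t in a..b, (0:ℝ)) < ∫ t in a..b, (g t)^2 :=
            integral_lt_integral_of_continuousOn_of_le_of_exists_lt hab
              continuousOn_const ((hgc.pow 2).continuousOn)
              (fun x _ => sq_nonneg _)
              ⟨c, hc, lt_of_le_of_ne (sq_nonneg _) (Ne.symm (pow_ne_zero 2 hgc0))⟩
          simpa using h0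
        linarith
      -- first integration: deriv w - p1 vanishes on [a,b]
      have hs1 : ∀ s ∈ Icc a b, deriv w s - p1.eval s = 0 := by
        intro s hs
        have hd : ∀ u ∈ uIcc a s, HasDerivAt (fun u => deriv w u - p1.eval u) (g u) u :=
          fun u _ => ((hwd' u).hasDerivAt).sub (p1.hasDerivAt u)
        have hft : (∫ u in a..s, g u)
            = (deriv w s - p1.eval s) - (deriv w a - p1.eval a) :=
          integral_eq_sub_of_hasDerivAt hd (hgc.intervalIntegrable a s)
        have hz : (∫ u in a..s, g u) = 0 := by
          rw [intervalIntegral.integral_congr (g := fun _ => (0:ℝ))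
            (fun u hu => hg0 u (by
              rw [uIcc_of_le hs.1] at hu
              exact Icc_subset_Icc le_rfl hs.2 hu))]
          simp
        rw [hz, ha1] at hft
        linarith
      -- second integration: w - p vanishes on [a,b]
      have hd : ∀ u ∈ uIcc a t, HasDerivAt (fun u => w u - p.eval u)
          (deriv w u - p1.eval u) u :=
        fun u _ => ((hwd u).hasDerivAt).sub (p.hasDerivAt u)
      have hft : (∫ u in a..t, (deriv w u - p1.eval u))
          = (w t - p.eval t) - (w a - p.eval a) :=
        integral_eq_sub_of_hasDerivAt hd
          (((hw'.continuous).sub p1.continuous_aeval).intervalIntegrable a t)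
      have hz : (∫ u in a..t, (deriv w u - p1.eval u)) = 0 := by
        rw [intervalIntegral.integral_congr (g := fun _ => (0:ℝ))
          (fun u hu => hs1 u (by
            rw [uIcc_of_le ht.1] at hu
            exact Icc_subset_Icc le_rfl ht.2 hu))]
        simp
      rw [hz, ha0] at hft
      linarith
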